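/- Let K be a field with a valuation v taking values in a linearly ordered commutative group with zero. Let a ∈ K with 0 < v(a) < 1, let β ∈ K with v(β) ≤ 1, and let n ∈ ℕ. Then 1 − aβ ≠ 0 and v( a⁻ⁿ·(1 − aβ)⁻¹ − Σ_{i=0}^{n} a^{i−n}·β^i ) < 1, i.e. a⁻ⁿ/(1 − aβ) is congruent to βⁿ + a⁻¹βⁿ⁻¹ + ⋯ + a⁻ⁿ modulo the maximal ideal of v. -/

import Mathlib

/-- for 0 < v(a) < 1 and v(β) ≤ 1, one has 1 − aβ ≠ 0 and
    a⁻ⁿ/(1 − aβ) ≡ Σ_{i=0}^{n} a^{i−n} β^i modulo the maximal ideal. -/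
theorem stmt_6 {K : Type*} [Field K] {Γ₀ : Type*} [LinearOrderedCommGroupWithZero Γ₀]
    (v : Valuation K Γ₀) (a β : K) (ha0 : 0 < v a) (ha1 : v a < 1) (hβ : v β ≤ 1) (n : ℕ) :
    1 - a * β ≠ 0 ∧
      v (a⁻¹ ^ n * (1 - a * β)⁻¹ -
        ∑ i ∈ Finset.range (n + 1), a ^ ((i : ℤ) - (n : ℤ)) * β ^ i) < 1 := by
  have ha : a ≠ 0 := by
    intro h
    simp [h] at ha0
  have hab : v (a * β) < 1 := by
    rw [map_mul]
    calc v a * v β ≤ v a * 1 := mul_le_mul_right hβ _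
    _ = v a := mul_one _
    _ < 1 := ha1
  have hx : v (1 - a * β) = 1 := v.map_one_sub_of_lt hab
  have hne : (1 : K) - a * β ≠ 0 := by
    intro h
    rw [h] at hx
    simp at hx
  refine ⟨hne, ?_⟩
  have hsum : ∑ i ∈ Finset.range (n + 1), a ^ ((i : ℤ) - (n : ℤ)) * β ^ i
      = a⁻¹ ^ n * ∑ i ∈ Finset.range (n + 1), (a * β) ^ i := by
    rw [Finset.mul_sum]
    refine Finset.sum_congr rfl (fun i _ => ?_)
    rw [zpow_sub₀ ha, zpow_natCast, zpow_natCast, mul_pow]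
    field_simp
    rw [mul_assoc, mul_comm, mul_assoc, ← mul_pow, one_div, inv_mul_cancel₀ ha, one_pow, mul_one]
  have hgeom : (∑ i ∈ Finset.range (n + 1), (a * β) ^ i) * (1 - a * β)
      = 1 - (a * β) ^ (n + 1) := by
    have := geom_sum_mul (a * β) (n + 1)
    linear_combination -this
  have key : a⁻¹ ^ n * (1 - a * β)⁻¹ -
      ∑ i ∈ Finset.range (n + 1), a ^ ((i : ℤ) - (n : ℤ)) * β ^ i
      = a * β ^ (n + 1) * (1 - a * β)⁻¹ := by
    have h1 : (1 - a * β)⁻¹ * (1 - a * β) = 1 := inv_mul_cancel₀ hne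
    have h2 : a⁻¹ ^ n * a ^ n = 1 := by
      rw [← mul_pow, inv_mul_cancel₀ ha, one_pow]
    have step1 : a⁻¹ ^ n * (1 - a * β)⁻¹ -
        a⁻¹ ^ n * ∑ i ∈ Finset.range (n + 1), (a * β) ^ i
        = a⁻¹ ^ n * (1 - a * β)⁻¹ *
          (1 - (∑ i ∈ Finset.range (n + 1), (a * β) ^ i) * (1 - a * β)) := by
      linear_combination (a⁻¹ ^ n * ∑ i ∈ Finset.range (n + 1), (a * β) ^ i) * h1
    rw [hsum, step1, hgeom]
    linear_combination ((1 - a * β)⁻¹ * β ^ (n + 1) * a) * h2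
  rw [key, map_mul, map_mul, map_inv₀, hx, inv_one, mul_one, map_pow]
  calc v a * v β ^ (n + 1) ≤ v a * 1 := mul_le_mul_right (pow_le_one' hβ _) _
  _ = v a := mul_one _
  _ < 1 := ha1
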